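/- For every finite undirected simple graph G=(V,E) with V nonempty, the minimum over all orientations Ḡ of G of the maximum out-degree Δ(Ḡ) equals the maximum over all nonempty subsets S ⊆ V of ⌈|E(S)|/|S|⌉, where E(S) is the set of edges of G with both endpoints in S. In particular, there exists an orientation of G containing no improving path between any two vertices, and any such orientation achieves this minimum. -/

import Mathlib

open Finset

/-- An orientation of a simple graph `G`: a choice, for each edge `{u,v}` of `G`,
of exactly one of the directed edges `(u,v)`, `(v,u)`. -/
structure GraphOrientation {V : Type*} (G : SimpleGraph V) where
  dir : V → V → Bool
  dir_adj : ∀ u v, dir u v = true → G.Adj u v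
  exactly_one : ∀ u v, G.Adj u v → (dir u v = true ↔ ¬ dir v u = true)

/-- Out-degree of `v` w.r.t. a directed-edge relation `d`. -/
def outDegF {V : Type*} [Fintype V] (d : V → V → Bool) (v : V) : ℕ :=
  (Finset.univ.filter fun w => d v w = true).card

/-- Out-degree of a vertex in an orientation. -/
def GraphOrientation.outDeg {V : Type*} [Fintype V] {G : SimpleGraph V}
    (o : GraphOrientation G) (v : V) : ℕ := outDegF o.dir v

/-- Maximum out-degree `Δ` of an orientation. -/
def GraphOrientation.maxOutDeg {V : Type*} [Fintype V] {G : SimpleGraph V}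
    (o : GraphOrientation G) : ℕ := Finset.univ.sup o.outDeg

/-- `|E(S)|`: the number of edges of `G` with both endpoints in `S`. -/
def edgeCount {V : Type*} [Fintype V] [DecidableEq V] (G : SimpleGraph V)
    [DecidableRel G.Adj] (S : Finset V) : ℕ :=
  (G.edgeFinset.filter fun e => ∀ x ∈ e, x ∈ S).card

/-- A directed path in an orientation: a list of distinct vertices, of length at
least two (i.e. `k ≥ 1` edges), with consecutive vertices joined by directed edges. -/
def IsDirPath {V : Type*} {G : SimpleGraph V} (o : GraphOrientation G) (p : List V) : Prop :=
  p.Nodup ∧ 2 ≤ p.length ∧ List.Chain' (fun a b => o.dir a b = true) p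

/-- A directed path from `a` to `b`. -/
def IsPathFrom {V : Type*} {G : SimpleGraph V} (o : GraphOrientation G)
    (p : List V) (a b : V) : Prop :=
  IsDirPath o p ∧ p.head? = some a ∧ p.getLast? = some b

/-- Invariant 1: there is no improving path between any two vertices, i.e. no directed
path `⟨a,…,b⟩` with `odeg(a) > odeg(b) + 1`. -/
def Invariant1 {V : Type*} [Fintype V] {G : SimpleGraph V} (o : GraphOrientation G) : Prop :=
  ∀ p a b, IsPathFrom o p a b → o.outDeg a ≤ o.outDeg b + 1

/-- Invariant 2: there is no improving path starting at a vertex of maximum out-degree. -/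
def Invariant2 {V : Type*} [Fintype V] {G : SimpleGraph V} (o : GraphOrientation G) : Prop :=
  ∀ p a b, IsPathFrom o p a b → o.outDeg a = o.maxOutDeg → o.outDeg a ≤ o.outDeg b + 1

/-- Flipping the directed path `p`: every directed edge `(v_i, v_{i+1})` of `p`
is replaced by the reversed edge `(v_{i+1}, v_i)`; all other edges are unchanged. -/
def flipDir {V : Type*} [DecidableEq V] (d : V → V → Bool) (p : List V) : V → V → Bool :=
  fun a b => if (a, b) ∈ p.zip p.tail ∨ (b, a) ∈ p.zip p.tail then d b a else d a b

/-- `G + {u,v}`: the graph obtained from `G` by inserting the edge `{u,v}`. -/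
def addE {V : Type*} (G : SimpleGraph V) (u v : V) : SimpleGraph V :=
  G ⊔ SimpleGraph.fromEdgeSet {s(u, v)}

/-- `G − {u,v}`: the graph obtained from `G` by deleting the edge `{u,v}`. -/
def delE {V : Type*} (G : SimpleGraph V) (u v : V) : SimpleGraph V :=
  G.deleteEdges {s(u, v)}

section H
variable {V : Type*} {G : SimpleGraph V}

lemma dir_not_rev (o : GraphOrientation G) {u v : V} (h : o.dir u v = true) :
    ¬ o.dir v u = true := (o.exactly_one u v (o.dir_adj u v h)).mp h

lemma dir_or (o : GraphOrientation G) {u v : V} (h : G.Adj u v) :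
    o.dir u v = true ∨ o.dir v u = true := by
  by_cases hd : o.dir u v = true
  · exact Or.inl hd
  · exact Or.inr (by_contra fun h2 => hd ((o.exactly_one u v h).mpr h2))

/-- consecutive pairs of a chain are related -/
lemma rel_of_mem_zip {R : V → V → Prop} :
    ∀ {p : List V}, List.Chain' R p → ∀ {x y : V}, (x, y) ∈ p.zip p.tail → R x y := by
  intro p
  induction p with
  | nil => simp
  | cons a rest ih =>
    intro hch x y hxy
    cases rest with
    | nil => simp at hxy
    | cons b t =>
      simp only [List.tail_cons, List.zip_cons_cons, List.mem_cons] at hxy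
      rcases hxy with h | h
      · obtain ⟨rfl, rfl⟩ := Prod.mk.injEq _ _ _ _ ▸ h
        exact (List.isChain_cons_cons.mp hch).1
      · exact ih (List.isChain_cons_cons.mp hch).2 h

lemma zip_succ_unique :
    ∀ {p : List V}, p.Nodup → ∀ {x y y' : V},
      (x, y) ∈ p.zip p.tail → (x, y') ∈ p.zip p.tail → y = y' := by
  intro p
  induction p with
  | nil => simp
  | cons a rest ih =>
    intro hnd x y y' h1 h2
    cases rest with
    | nil => simp at h1
    | cons b t =>
      simp only [List.tail_cons, List.zip_cons_cons, List.mem_cons] at h1 h2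
      have hna : a ∉ (b :: t) := (List.nodup_cons.mp hnd).1
      rcases h1 with h1 | h1 <;> rcases h2 with h2 | h2
      · cases h1; cases h2; rfl
      · cases h1; exact absurd (List.of_mem_zip h2).1 hna
      · cases h2; exact absurd (List.of_mem_zip h1).1 hna
      · exact ih (List.nodup_cons.mp hnd).2 h1 h2

lemma zip_pred_unique :
    ∀ {p : List V}, p.Nodup → ∀ {x x' y : V},
      (x, y) ∈ p.zip p.tail → (x', y) ∈ p.zip p.tail → x = x' := by
  intro p
  induction p with
  | nil => simp
  | cons a rest ih =>
    intro hnd x x' y h1 h2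
    cases rest with
    | nil => simp at h1
    | cons b t =>
      simp only [List.tail_cons, List.zip_cons_cons, List.mem_cons] at h1 h2
      have hnb : b ∉ t := (List.nodup_cons.mp (List.nodup_cons.mp hnd).2).1
      rcases h1 with h1 | h1 <;> rcases h2 with h2 | h2
      · cases h1; cases h2; rfl
      · cases h1; exact absurd (List.of_mem_zip h2).2 hnb
      · cases h2; exact absurd (List.of_mem_zip h1).2 hnb
      · exact ih (List.nodup_cons.mp hnd).2 h1 h2

lemma zip_fst_mem_dropLast :
    ∀ {p : List V} {x y : V}, (x, y) ∈ p.zip p.tail → x ∈ p.dropLast := by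
  intro p
  induction p with
  | nil => simp
  | cons a rest ih =>
    intro x y h
    cases rest with
    | nil => simp at h
    | cons b t =>
      simp only [List.tail_cons, List.zip_cons_cons, List.mem_cons] at h
      rcases h with h | h
      · cases h; simp [List.dropLast_cons₂]
      · have := ih h
        simp only [List.dropLast_cons₂, List.mem_cons]
        right; exact this

lemma zip_succ_exists :
    ∀ {p : List V} {x : V}, x ∈ p.dropLast → ∃ y, (x, y) ∈ p.zip p.tail := by
  intro p
  induction p with
  | nil => simp
  | cons a rest ih =>
    intro x h
    cases rest with
    | nil => simp at h
    | cons b t =>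
      simp only [List.dropLast_cons₂, List.mem_cons] at h
      rcases h with rfl | h
      · exact ⟨b, by simp⟩
      · obtain ⟨y, hy⟩ := ih h
        exact ⟨y, by simp only [List.tail_cons, List.zip_cons_cons, List.mem_cons]; right; exact hy⟩

lemma zip_pred_exists :
    ∀ {p : List V} {y : V}, y ∈ p.tail → ∃ x, (x, y) ∈ p.zip p.tail := by
  intro p
  induction p with
  | nil => simp
  | cons a rest ih =>
    intro y h
    cases rest with
    | nil => simp at h
    | cons b t =>
      simp only [List.tail_cons, List.mem_cons] at h
      rcases h with rfl | h
      · exact ⟨a, by simp⟩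
      · obtain ⟨x, hx⟩ := ih (by simpa using h)
        exact ⟨x, by simp only [List.tail_cons, List.zip_cons_cons, List.mem_cons]; right; exact hx⟩

lemma getLast_not_mem_dropLast {p : List V} (hnd : p.Nodup) {b : V}
    (hb : p.getLast? = some b) : b ∉ p.dropLast := by
  have hne : p ≠ [] := by rintro rfl; simp at hb
  have hb' : p.getLast hne = b := by
    rw [List.getLast?_eq_getLast hne] at hb; exact Option.some.inj hb
  have := List.dropLast_append_getLast hne
  rw [hb'] at this
  rw [← this] at hnd
  have := (List.nodup_append'.mp hnd).2.2
  intro hmem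
  exact this hmem (by simp)

lemma head_eq_of_head? {p : List V} {a : V} (h : p.head? = some a) :
    ∃ t, p = a :: t := by
  cases p with
  | nil => simp at h
  | cons x t =>
    simp only [List.head?_cons, Option.some.injEq] at h
    exact ⟨t, by rw [h]⟩

end H


section H2
variable {V : Type*} [DecidableEq V] {G : SimpleGraph V}

/-- The orientation obtained by flipping along `p`. -/
def flipO (o : GraphOrientation G) (p : List V) : GraphOrientation G where
  dir := flipDir o.dir p
  dir_adj := by
    intro u v h
    by_cases hc : (u, v) ∈ p.zip p.tail ∨ (v, u) ∈ p.zip p.tail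
    · have : o.dir v u = true := by simpa [flipDir, hc] using h
      exact (o.dir_adj v u this).symm
    · exact o.dir_adj u v (by simpa [flipDir, hc] using h)
  exactly_one := by
    intro u v hadj
    by_cases hc : (u, v) ∈ p.zip p.tail ∨ (v, u) ∈ p.zip p.tail
    · have hc' : (v, u) ∈ p.zip p.tail ∨ (u, v) ∈ p.zip p.tail := hc.symm
      simp only [flipDir, if_pos hc, if_pos hc']
      exact o.exactly_one v u hadj.symm
    · have hc' : ¬((v, u) ∈ p.zip p.tail ∨ (u, v) ∈ p.zip p.tail) := fun h => hc h.symm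
      simp only [flipDir, if_neg hc, if_neg hc']
      exact o.exactly_one u v hadj

lemma flipO_dir (o : GraphOrientation G) (p : List V) (u v : V) :
    (flipO o p).dir u v
      = if (u, v) ∈ p.zip p.tail ∨ (v, u) ∈ p.zip p.tail then o.dir v u else o.dir u v := rfl

variable [Fintype V]

lemma flip_outDeg_not_mem (o : GraphOrientation G) {p : List V} {v : V} (hv : v ∉ p) :
    (flipO o p).outDeg v = o.outDeg v := by
  unfold GraphOrientation.outDeg outDegF
  congr 1
  apply Finset.filter_congr
  intro w _
  have hc : ¬((v, w) ∈ p.zip p.tail ∨ (w, v) ∈ p.zip p.tail) := by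
    rintro (h | h)
    · exact hv (List.of_mem_zip h).1
    · exact hv (List.mem_of_mem_tail (List.of_mem_zip h).2)
  rw [flipO_dir, if_neg hc]

lemma flip_outDeg_head (o : GraphOrientation G) {p : List V} {a s : V}
    (hnd : p.Nodup) (hch : List.Chain' (fun x y => o.dir x y = true) p)
    (hh : p.head? = some a) (hs : (a, s) ∈ p.zip p.tail) :
    (flipO o p).outDeg a + 1 = o.outDeg a := by
  have hdas : o.dir a s = true := rel_of_mem_zip hch hs
  have hsa : o.dir s a = false :=
    Bool.eq_false_iff.mpr (fun h => dir_not_rev o hdas h)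
  have hnopred : ∀ w, (w, a) ∉ p.zip p.tail := by
    obtain ⟨t, rfl⟩ := head_eq_of_head? hh
    intro w hw
    exact (List.nodup_cons.mp hnd).1 (by simpa using (List.of_mem_zip hw).2)
  have hset : Finset.univ.filter (fun w => (flipO o p).dir a w = true)
      = (Finset.univ.filter (fun w => o.dir a w = true)).erase s := by
    ext w
    simp only [Finset.mem_filter, Finset.mem_univ, true_and, Finset.mem_erase]
    by_cases h1 : (a, w) ∈ p.zip p.tail
    · have hws : w = s := zip_succ_unique hnd h1 hs
      subst hws
      rw [flipO_dir, if_pos (Or.inl h1), hsa]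
      simp
    · have hc : ¬((a, w) ∈ p.zip p.tail ∨ (w, a) ∈ p.zip p.tail) := by
        rintro (h | h)
        · exact h1 h
        · exact hnopred w h
      rw [flipO_dir, if_neg hc]
      have hws : w ≠ s := by rintro rfl; exact h1 hs
      simp [hws]
  unfold GraphOrientation.outDeg outDegF
  rw [hset]
  exact Finset.card_erase_add_one (by simp [hdas])

lemma flip_outDeg_last (o : GraphOrientation G) {p : List V} {b t : V}
    (hnd : p.Nodup) (hch : List.Chain' (fun x y => o.dir x y = true) p)
    (hl : p.getLast? = some b) (ht : (t, b) ∈ p.zip p.tail) :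
    (flipO o p).outDeg b = o.outDeg b + 1 := by
  have hdtb : o.dir t b = true := rel_of_mem_zip hch ht
  have hbt : o.dir b t = false :=
    Bool.eq_false_iff.mpr (fun h => dir_not_rev o hdtb h)
  have hnosucc : ∀ w, (b, w) ∉ p.zip p.tail := by
    intro w hw
    exact getLast_not_mem_dropLast hnd hl (zip_fst_mem_dropLast hw)
  have hset : Finset.univ.filter (fun w => (flipO o p).dir b w = true)
      = insert t (Finset.univ.filter (fun w => o.dir b w = true)) := by
    ext w
    simp only [Finset.mem_filter, Finset.mem_univ, true_and, Finset.mem_insert]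
    by_cases h1 : (w, b) ∈ p.zip p.tail
    · have hwt : w = t := zip_pred_unique hnd h1 ht
      subst hwt
      rw [flipO_dir, if_pos (Or.inr h1), hdtb]
      simp
    · have hc : ¬((b, w) ∈ p.zip p.tail ∨ (w, b) ∈ p.zip p.tail) := by
        rintro (h | h)
        · exact hnosucc w h
        · exact h1 h
      rw [flipO_dir, if_neg hc]
      have hwt : w ≠ t := by rintro rfl; exact h1 ht
      simp [hwt]
  unfold GraphOrientation.outDeg outDegF
  rw [hset]
  exact Finset.card_insert_of_notMem (by simp [hbt])

lemma flip_outDeg_interior (o : GraphOrientation G) {p : List V} {v s t : V}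
    (hnd : p.Nodup) (hch : List.Chain' (fun x y => o.dir x y = true) p)
    (hs : (v, s) ∈ p.zip p.tail) (ht : (t, v) ∈ p.zip p.tail) :
    (flipO o p).outDeg v = o.outDeg v := by
  have hdvs : o.dir v s = true := rel_of_mem_zip hch hs
  have hdtv : o.dir t v = true := rel_of_mem_zip hch ht
  have hsv : o.dir s v = false :=
    Bool.eq_false_iff.mpr (fun h => dir_not_rev o hdvs h)
  have hvt : o.dir v t = false :=
    Bool.eq_false_iff.mpr (fun h => dir_not_rev o hdtv h)
  have hst : s ≠ t := by
    rintro rfl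
    exact dir_not_rev o hdvs hdtv
  have hset : Finset.univ.filter (fun w => (flipO o p).dir v w = true)
      = insert t ((Finset.univ.filter (fun w => o.dir v w = true)).erase s) := by
    ext w
    simp only [Finset.mem_filter, Finset.mem_univ, true_and, Finset.mem_insert,
      Finset.mem_erase]
    by_cases h1 : (v, w) ∈ p.zip p.tail
    · have hws : w = s := zip_succ_unique hnd h1 hs
      subst hws
      rw [flipO_dir, if_pos (Or.inl h1), hsv]
      simp [hst]
    · by_cases h2 : (w, v) ∈ p.zip p.tail
      · have hwt : w = t := zip_pred_unique hnd h2 ht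
        subst hwt
        rw [flipO_dir, if_pos (Or.inr h2), hdtv]
        simp
      · rw [flipO_dir, if_neg (by
          rintro (h | h)
          · exact h1 h
          · exact h2 h)]
        have hws : w ≠ s := by rintro rfl; exact h1 hs
        have hwt : w ≠ t := by rintro rfl; exact h2 ht
        simp [hws, hwt]
  unfold GraphOrientation.outDeg outDegF
  rw [hset, Finset.card_insert_of_notMem (by simp [hvt]),
    Finset.card_erase_add_one (by simp [hdvs])]

end H2


section H3
variable {V : Type*} [Fintype V] [DecidableEq V] {G : SimpleGraph V}

omit [Fintype V] [DecidableEq V] in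
lemma mem_dropLast_of_ne_getLast {p : List V} {b v : V} (hl : p.getLast? = some b)
    (hv : v ∈ p) (hvb : v ≠ b) : v ∈ p.dropLast := by
  have hne : p ≠ [] := by rintro rfl; simp at hl
  have hb' : p.getLast hne = b := by
    rw [List.getLast?_eq_getLast hne] at hl; exact Option.some.inj hl
  have hsplit := List.dropLast_append_getLast hne
  rw [hb'] at hsplit
  rw [← hsplit] at hv
  rcases List.mem_append.mp hv with h | h
  · exact h
  · simp at h; exact absurd h hvb

lemma flip_changes (o : GraphOrientation G) {p : List V} {a b : V}
    (hp : IsPathFrom o p a b) :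
    a ≠ b ∧ ((flipO o p).outDeg a + 1 = o.outDeg a)
      ∧ ((flipO o p).outDeg b = o.outDeg b + 1)
      ∧ ∀ v, v ≠ a → v ≠ b → (flipO o p).outDeg v = o.outDeg v := by
  obtain ⟨⟨hnd, hlen, hch⟩, hh, hl⟩ := hp
  obtain ⟨t0, hpeq⟩ := head_eq_of_head? hh
  have hamem : a ∈ p := by rw [hpeq]; simp
  have hbtail : b ∈ p.tail := by
    rw [hpeq] at hl ⊢
    cases t0 with
    | nil => simp [hpeq] at hlen
    | cons c t' =>
      rw [List.getLast?_cons_cons] at hl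
      simpa using List.mem_of_getLast? hl
  have hab : a ≠ b := by
    rintro rfl
    rw [hpeq] at hnd hbtail
    exact (List.nodup_cons.mp hnd).1 (by simpa using hbtail)
  have hadrop : a ∈ p.dropLast :=
    mem_dropLast_of_ne_getLast hl hamem hab
  obtain ⟨s, hs⟩ := zip_succ_exists hadrop
  obtain ⟨t, ht⟩ := zip_pred_exists hbtail
  refine ⟨hab, flip_outDeg_head o hnd hch hh hs, flip_outDeg_last o hnd hch hl ht, ?_⟩
  intro v hva hvb
  by_cases hvp : v ∈ p
  · have hvtail : v ∈ p.tail := by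
      rw [hpeq] at hvp ⊢
      rcases List.mem_cons.mp hvp with rfl | h
      · exact absurd rfl hva
      · simpa using h
    have hvdrop : v ∈ p.dropLast := mem_dropLast_of_ne_getLast hl hvp hvb
    obtain ⟨s', hs'⟩ := zip_succ_exists hvdrop
    obtain ⟨t', ht'⟩ := zip_pred_exists hvtail
    exact flip_outDeg_interior o hnd hch hs' ht'
  · exact flip_outDeg_not_mem o hvp

/-- potential function -/
def Phi (o : GraphOrientation G) : ℕ := ∑ v, (o.outDeg v) ^ 2

lemma phi_flip_lt (o : GraphOrientation G) {p : List V} {a b : V}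
    (hp : IsPathFrom o p a b) (himp : o.outDeg b + 1 < o.outDeg a) :
    Phi (flipO o p) < Phi o := by
  obtain ⟨hab, ha, hb, hrest⟩ := flip_changes o hp
  have hsplit : ∀ h : V → ℕ, ∑ v, (h v) ^ 2
      = (h a) ^ 2 + ((h b) ^ 2 + ∑ v ∈ (Finset.univ.erase a).erase b, (h v) ^ 2) := by
    intro h
    rw [Finset.add_sum_erase _ (fun v => (h v) ^ 2)
        (Finset.mem_erase.mpr ⟨hab.symm, Finset.mem_univ b⟩),
      Finset.add_sum_erase _ (fun v => (h v) ^ 2) (Finset.mem_univ a)]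
  have hcong : ∑ v ∈ (Finset.univ.erase a).erase b, ((flipO o p).outDeg v) ^ 2
      = ∑ v ∈ (Finset.univ.erase a).erase b, (o.outDeg v) ^ 2 := by
    refine Finset.sum_congr rfl fun v hv => ?_
    simp only [Finset.mem_erase] at hv
    rw [hrest v hv.2.1 hv.1]
  unfold Phi
  rw [hsplit (flipO o p).outDeg, hsplit o.outDeg, hcong]
  nlinarith [ha, hb, himp]

noncomputable def baseO (G : SimpleGraph V) [DecidableRel G.Adj] : GraphOrientation G where
  dir u v := decide (G.Adj u v ∧ (Fintype.equivFin V) u < (Fintype.equivFin V) v)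
  dir_adj := by
    intro u v h
    simp only [decide_eq_true_eq] at h
    exact h.1
  exactly_one := by
    intro u v h
    have hne : (Fintype.equivFin V) u ≠ (Fintype.equivFin V) v := by
      simp only [ne_eq, EmbeddingLike.apply_eq_iff_eq]
      exact G.ne_of_adj h
    simp only [decide_eq_true_eq]
    constructor
    · rintro ⟨_, hlt⟩ ⟨_, hlt'⟩
      exact absurd hlt' (not_lt.mpr hlt.le)
    · intro hn
      refine ⟨h, ?_⟩
      rcases hne.lt_or_gt with hlt | hgt
      · exact hlt
      · exact absurd ⟨h.symm, hgt⟩ hn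

lemma exists_inv1_aux (G : SimpleGraph V) [DecidableRel G.Adj] :
    ∀ (n : ℕ) (o : GraphOrientation G), Phi o ≤ n → ∃ o' : GraphOrientation G, Invariant1 o' := by
  intro n
  induction n with
  | zero =>
    intro o h
    by_cases hI : Invariant1 o
    · exact ⟨o, hI⟩
    · exfalso
      unfold Invariant1 at hI
      push_neg at hI
      obtain ⟨q, x, y, hq, himp⟩ := hI
      have := phi_flip_lt o hq (by omega)
      omega
  | succ n ih =>
    intro o h
    by_cases hI : Invariant1 o
    · exact ⟨o, hI⟩
    · unfold Invariant1 at hI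
      push_neg at hI
      obtain ⟨q, x, y, hq, himp⟩ := hI
      have := phi_flip_lt o hq (by omega)
      exact ih (flipO o q) (by omega)

lemma exists_inv1 (G : SimpleGraph V) [DecidableRel G.Adj] :
    ∃ o : GraphOrientation G, Invariant1 o :=
  exists_inv1_aux G (Phi (baseO G)) (baseO G) le_rfl

end H3


section H4
variable {V : Type*} [Fintype V] [DecidableEq V] {G : SimpleGraph V}

lemma card_pairs (d : V → V → Bool) (S : Finset V) :
    ((S ×ˢ Finset.univ).filter fun q : V × V => d q.1 q.2 = true).card
      = ∑ v ∈ S, outDegF d v := by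
  rw [Finset.card_eq_sum_card_fiberwise (f := Prod.fst) (t := S)
    (fun q hq => (Finset.mem_product.mp (Finset.mem_filter.mp hq).1).1)]
  refine Finset.sum_congr rfl fun v hv => ?_
  have hfib : Finset.filter (fun q : V × V => q.1 = v)
      (Finset.filter (fun q : V × V => d q.1 q.2 = true) (S ×ˢ Finset.univ))
      = {v} ×ˢ (Finset.univ.filter fun w => d v w = true) := by
    ext ⟨x, w⟩
    simp only [Finset.mem_filter, Finset.mem_product, Finset.mem_univ, and_true,
      Finset.mem_singleton, true_and]
    constructor
    · rintro ⟨⟨hx, hd⟩, rfl⟩; exact ⟨rfl, hd⟩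
    · rintro ⟨rfl, hd⟩; exact ⟨⟨hv, hd⟩, rfl⟩
  rw [hfib, Finset.card_product, Finset.card_singleton, one_mul]
  rfl

lemma edgeCount_le_pairs [DecidableRel G.Adj] (o : GraphOrientation G) (S : Finset V) :
    edgeCount G S ≤ ((S ×ˢ Finset.univ).filter fun q : V × V => o.dir q.1 q.2 = true).card := by
  apply Finset.card_le_card_of_surjOn (fun q : V × V => s(q.1, q.2))
  intro e he
  induction e using Sym2.ind with
  | _ x y =>
    simp only [Finset.mem_coe, Finset.mem_filter, SimpleGraph.mem_edgeFinset,
      SimpleGraph.mem_edgeSet, Sym2.mem_iff] at he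
    obtain ⟨hadj, hS⟩ := he
    have hxS : x ∈ S := hS x (Or.inl rfl)
    have hyS : y ∈ S := hS y (Or.inr rfl)
    rcases dir_or o hadj with hd | hd
    · exact ⟨(x, y), by
        simp only [Finset.mem_coe, Finset.mem_filter, Finset.mem_product, Finset.mem_univ,
          and_true]
        exact ⟨hxS, hd⟩, rfl⟩
    · exact ⟨(y, x), by
        simp only [Finset.mem_coe, Finset.mem_filter, Finset.mem_product, Finset.mem_univ,
          and_true]
        exact ⟨hyS, hd⟩, Sym2.eq_swap⟩

lemma pairs_le_edgeCount [DecidableRel G.Adj] (o : GraphOrientation G) (S : Finset V)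
    (hcl : ∀ v ∈ S, ∀ w, o.dir v w = true → w ∈ S) :
    ((S ×ˢ Finset.univ).filter fun q : V × V => o.dir q.1 q.2 = true).card
      ≤ edgeCount G S := by
  apply Finset.card_le_card_of_injOn (fun q : V × V => s(q.1, q.2))
  · rintro ⟨x, w⟩ hq
    simp only [Finset.mem_coe, Finset.mem_filter, Finset.mem_product, Finset.mem_univ, and_true] at hq
    obtain ⟨hxS, hd⟩ := hq
    have hadj := o.dir_adj _ _ hd
    have hwS := hcl x hxS w hd
    simp only [edgeCount, Finset.mem_coe, Finset.mem_filter, SimpleGraph.mem_edgeFinset,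
      SimpleGraph.mem_edgeSet, Sym2.mem_iff]
    refine ⟨hadj, fun z hz => ?_⟩
    rcases hz with rfl | rfl
    · exact hxS
    · exact hwS
  · rintro ⟨x, w⟩ hq ⟨x', w'⟩ hq' heq
    simp only [Finset.coe_filter, Set.mem_setOf_eq, Finset.mem_product, Finset.mem_univ,
      and_true] at hq hq'
    simp only [Sym2.eq_iff] at heq
    rcases heq with ⟨rfl, rfl⟩ | ⟨rfl, rfl⟩
    · rfl
    · exact absurd hq'.2 (dir_not_rev o hq.2)

lemma ceilDiv_le_of_le_mul {x s m : ℕ} (hs : 0 < s) (h : x ≤ s * m) : x ⌈/⌉ s ≤ m := by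
  rw [Nat.ceilDiv_eq_add_pred_div, Nat.div_le_iff_le_mul_add_pred hs]
  omega

lemma le_ceilDiv_of_mul_lt {x s D : ℕ} (hs : 0 < s) (h : D * s + 1 ≤ x) :
    D + 1 ≤ x ⌈/⌉ s := by
  rw [Nat.ceilDiv_eq_add_pred_div, Nat.le_div_iff_mul_le hs]
  have hDs : (D + 1) * s = D * s + s := by ring
  omega

omit [Fintype V] [DecidableEq V] in
lemma chain'_mem_path {step : V → V → Prop} :
    ∀ (p : List V), List.Chain' step p → ∀ w ∈ p,
      ∃ q : List V, q.Sublist p ∧ List.Chain' step q ∧ q.head? = p.head?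
        ∧ q.getLast? = some w := by
  intro p
  induction p with
  | nil => simp
  | cons x rest ih =>
    intro hch w hw
    rcases List.mem_cons.mp hw with rfl | hw'
    · exact ⟨[w], by simp, List.isChain_singleton w, rfl, rfl⟩
    · obtain ⟨q', hsub, hch', hh', hl'⟩ := ih hch.tail w hw'
      cases rest with
      | nil => simp at hw'
      | cons y t =>
        cases q' with
        | nil => simp at hl'
        | cons z q'' =>
          have hz : z = y := by simpa using hh'
          subst hz
          refine ⟨x :: z :: q'', List.Sublist.cons₂ x hsub, ?_, rfl, ?_⟩
          · exact List.isChain_cons_cons.mpr ⟨(List.isChain_cons_cons.mp hch).1, hch'⟩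
          · rw [List.getLast?_cons_cons]; exact hl'

omit [Fintype V] [DecidableEq V] in
lemma path_extend {step : V → V → Prop} {p : List V} {a v w : V}
    (hnd : p.Nodup) (hch : List.Chain' step p) (hh : p.head? = some a)
    (hl : p.getLast? = some v) (hs : step v w) (hw : w ∉ p) :
    (p ++ [w]).Nodup ∧ List.Chain' step (p ++ [w]) ∧ (p ++ [w]).head? = some a
      ∧ (p ++ [w]).getLast? = some w := by
  refine ⟨?_, ?_, ?_, List.getLast?_concat⟩
  · rw [List.nodup_append']
    exact ⟨hnd, List.nodup_singleton w, fun x hx hmem => by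
      simp only [List.mem_singleton] at hmem; subst hmem; exact hw hx⟩
  · refine List.isChain_append.mpr ?_
    refine ⟨hch, List.isChain_singleton w, fun x hx y hy => ?_⟩
    rw [hl] at hx
    simp only [Option.mem_def, Option.some.injEq] at hx
    simp only [List.head?_cons, Option.mem_def, Option.some.injEq] at hy
    subst hx; subst hy
    exact hs
  · obtain ⟨t, rfl⟩ := head_eq_of_head? hh
    rfl

end H4


/-- For every finite simple graph `G` on a nonempty vertex set, the
minimum over all orientations of the maximum out-degree equals the maximum over all
nonempty `S ⊆ V` of `⌈|E(S)|/|S|⌉`. In particular there exists an orientation with no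
improving path between any two vertices (Invariant 1), and any such orientation
attains the minimum. -/
theorem min_maxOutDeg_eq_max_ceil_density {V : Type*} [Fintype V] [DecidableEq V]
    [Nonempty V] (G : SimpleGraph V) [DecidableRel G.Adj] :
    (∃ o : GraphOrientation G, Invariant1 o) ∧
    ∀ o : GraphOrientation G, Invariant1 o →
      (∀ o' : GraphOrientation G, o.maxOutDeg ≤ o'.maxOutDeg) ∧
      o.maxOutDeg =
        (Finset.univ.filter fun S : Finset V => S.Nonempty).sup
          (fun S => edgeCount G S ⌈/⌉ S.card) := by
  classical
  have hub : ∀ o' : GraphOrientation G,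
      (Finset.univ.filter fun S : Finset V => S.Nonempty).sup
        (fun S => edgeCount G S ⌈/⌉ S.card) ≤ o'.maxOutDeg := by
    intro o'
    apply Finset.sup_le
    intro S hS
    have hSne : S.Nonempty := (Finset.mem_filter.mp hS).2
    have hcard : 0 < S.card := Finset.card_pos.mpr hSne
    have h1 : edgeCount G S ≤ S.card * o'.maxOutDeg := by
      calc edgeCount G S
          ≤ ((S ×ˢ Finset.univ).filter fun q : V × V => o'.dir q.1 q.2 = true).card :=
            edgeCount_le_pairs o' S
        _ = ∑ v ∈ S, outDegF o'.dir v := card_pairs o'.dir S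
        _ ≤ ∑ _v ∈ S, o'.maxOutDeg :=
            Finset.sum_le_sum fun v _ => Finset.le_sup (Finset.mem_univ v)
        _ = S.card * o'.maxOutDeg := by rw [Finset.sum_const, smul_eq_mul]
    exact ceilDiv_le_of_le_mul hcard h1
  refine ⟨exists_inv1 G, ?_⟩
  intro o hI
  have hkey : o.maxOutDeg ≤ (Finset.univ.filter fun S : Finset V => S.Nonempty).sup
      (fun S => edgeCount G S ⌈/⌉ S.card) := by
    rcases Nat.eq_zero_or_pos o.maxOutDeg with hz | hpos
    · rw [hz]; exact Nat.zero_le _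
    obtain ⟨D, hD⟩ : ∃ D, o.maxOutDeg = D + 1 := ⟨o.maxOutDeg - 1, by omega⟩
    obtain ⟨a, -, ha⟩ := Finset.exists_mem_eq_sup Finset.univ Finset.univ_nonempty o.outDeg
    have hDa : o.outDeg a = D + 1 := by
      unfold GraphOrientation.maxOutDeg at hD
      rw [← ha]
      exact hD
    set R : V → Prop := fun v => ∃ q : List V, q.Nodup
      ∧ List.Chain' (fun x y => o.dir x y = true) q ∧ q.head? = some a
      ∧ q.getLast? = some v with hR
    set S : Finset V := Finset.univ.filter R with hSdef
    have haS : a ∈ S := by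
      simp only [hSdef, Finset.mem_filter, Finset.mem_univ, true_and]
      exact ⟨[a], List.nodup_singleton a, List.isChain_singleton a, rfl, rfl⟩
    have hdeg : ∀ v ∈ S, D ≤ o.outDeg v := by
      intro v hv
      obtain ⟨q, hnd, hch, hh, hl⟩ := (Finset.mem_filter.mp hv).2
      cases q with
      | nil => simp at hh
      | cons x t =>
        cases t with
        | nil =>
          simp only [List.head?_cons, Option.some.injEq] at hh
          have hxv : x = v := by simpa using hl
          subst hh; subst hxv
          omega
        | cons y t' =>
          have hpf : IsPathFrom o (x :: y :: t') a v :=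
            ⟨⟨hnd, by simp, hch⟩, hh, hl⟩
          have := hI _ _ _ hpf
          omega
    have hcl : ∀ v ∈ S, ∀ w, o.dir v w = true → w ∈ S := by
      intro v hv w hd
      obtain ⟨q, hnd, hch, hh, hl⟩ := (Finset.mem_filter.mp hv).2
      simp only [hSdef, Finset.mem_filter, Finset.mem_univ, true_and]
      by_cases hwq : w ∈ q
      · obtain ⟨q', hsub, hch', hh', hl'⟩ :=
          chain'_mem_path q hch w hwq
        exact ⟨q', hnd.sublist hsub, hch', by rw [hh', hh], hl'⟩
      · obtain ⟨h1, h2, h3, h4⟩ := path_extend hnd hch hh hl hd hwq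
        exact ⟨q ++ [w], h1, h2, h3, h4⟩
    have hSne : S.Nonempty := ⟨a, haS⟩
    have hscard : 0 < S.card := Finset.card_pos.mpr hSne
    have hsum : D * S.card + 1 ≤ ∑ v ∈ S, o.outDeg v := by
      rw [← Finset.add_sum_erase S o.outDeg haS]
      have h2 : (S.erase a).card • D ≤ ∑ v ∈ S.erase a, o.outDeg v :=
        Finset.card_nsmul_le_sum _ _ _ (fun v hv => hdeg v (Finset.mem_of_mem_erase hv))
      have h3 : (S.erase a).card + 1 = S.card := Finset.card_erase_add_one haS
      have h5 : D * S.card = D * (S.erase a).card + D := by rw [← h3]; ring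
      have h6 : (S.erase a).card • D = D * (S.erase a).card := by
        rw [smul_eq_mul, mul_comm]
      omega
    have hEC : D * S.card + 1 ≤ edgeCount G S := by
      refine le_trans hsum ?_
      calc ∑ v ∈ S, o.outDeg v = ∑ v ∈ S, outDegF o.dir v := rfl
        _ = ((S ×ˢ Finset.univ).filter fun q : V × V => o.dir q.1 q.2 = true).card :=
            (card_pairs o.dir S).symm
        _ ≤ edgeCount G S := pairs_le_edgeCount o S hcl
    have hceil : D + 1 ≤ edgeCount G S ⌈/⌉ S.card := le_ceilDiv_of_mul_lt hscard hEC
    rw [hD]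
    exact le_trans hceil
      (Finset.le_sup (f := fun T => edgeCount G T ⌈/⌉ T.card)
        (Finset.mem_filter.mpr ⟨Finset.mem_univ S, hSne⟩))
  exact ⟨fun o' => le_trans hkey (hub o'), le_antisymm hkey (hub o)⟩
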